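/- For all real x, |tanh(x) - x| ≤ |x · tanh(x)^2|. -/

import Mathlib

open Real

lemma sinh_le_mul_cosh {y : ℝ} (hy : 0 ≤ y) : Real.sinh y ≤ y * Real.cosh y := by
  have h : MonotoneOn (fun t : ℝ => t * Real.cosh t - Real.sinh t) (Set.Ici 0) := by
    apply monotoneOn_of_deriv_nonneg (convex_Ici 0)
    · fun_prop
    · fun_prop
    · intro t ht
      simp only [interior_Ici, Set.mem_Ioi] at ht
      have hd : deriv (fun t : ℝ => t * Real.cosh t - Real.sinh t) t = t * Real.sinh t := by
        rw [deriv_fun_sub (by fun_prop) (by fun_prop), deriv_fun_mul (by fun_prop) (by fun_prop)]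
        simp
      rw [hd]
      exact mul_nonneg ht.le (Real.sinh_nonneg_iff.2 ht.le)
  have := h (Set.mem_Ici.2 le_rfl) (Set.mem_Ici.2 hy) hy
  simpa using this

theorem abs_tanh_sub_self_le (x : ℝ) :
    |Real.tanh x - x| ≤ |x * Real.tanh x ^ 2| := by
  have key : ∀ y : ℝ, 0 ≤ y → |Real.tanh y - y| ≤ |y * Real.tanh y ^ 2| := by
    intro y hy
    have c1 : (1:ℝ) ≤ Real.cosh y := Real.one_le_cosh y
    have cpos : (0:ℝ) < Real.cosh y := lt_of_lt_of_le one_pos c1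
    have hs : Real.sinh y ≤ y * Real.cosh y := sinh_le_mul_cosh hy
    have hsn : 0 ≤ Real.sinh y := Real.sinh_nonneg_iff.2 hy
    have hys : y ≤ Real.sinh y := (Real.self_le_sinh_iff).2 hy
    have hpy : Real.cosh y ^ 2 - Real.sinh y ^ 2 = 1 := by
      nlinarith [Real.cosh_sq_sub_sinh_sq y]
    have ht : Real.tanh y = Real.sinh y / Real.cosh y := Real.tanh_eq_sinh_div_cosh y
    have hty : Real.tanh y ≤ y := by
      rw [ht, div_le_iff₀ cpos]; linarith
    have htn : 0 ≤ Real.tanh y := by rw [ht]; positivity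
    rw [abs_of_nonpos (by linarith), abs_of_nonneg (by positivity), ht, div_pow]
    have h1 : y ≤ Real.sinh y * Real.cosh y :=
      le_trans hys (le_mul_of_one_le_right hsn c1)
    have key2 : (y - Real.sinh y / Real.cosh y) * Real.cosh y ^ 2 ≤ y * Real.sinh y ^ 2 := by
      have e : (y - Real.sinh y / Real.cosh y) * Real.cosh y ^ 2
          = y * Real.cosh y ^ 2 - Real.sinh y * Real.cosh y := by
        field_simp
      rw [e]; nlinarith [h1, hpy]
    have := (le_div_iff₀ (by positivity : (0:ℝ) < Real.cosh y ^ 2)).2 key2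
    rw [mul_div_assoc] at this
    linarith
  rcases le_or_gt 0 x with hx | hx
  · exact key x hx
  · have h := key (-x) (by linarith)
    rw [Real.tanh_neg] at h
    have e1 : Real.tanh x - x = -(-Real.tanh x - -x) := by ring
    have e2 : x * Real.tanh x ^ 2 = -(-x * (-Real.tanh x) ^ 2) := by ring
    rw [e1, e2, abs_neg, abs_neg]
    exact h
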